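/- Let μ₁, μ₂ be probability measures on a measurable space, and let Y, Φ be measurable real-valued functions such that the conditional expectation of Y given Φ is the same measurable function h under both μ₁ and μ₂ (i.e., E_{μᵢ}[Y | Φ] = h(Φ) μᵢ-a.s. for i = 1, 2). Then for any λ ∈ [0,1], under the mixture measure μ = λ·μ₁ + (1−λ)·μ₂, E_μ[Y | Φ] = h(Φ) μ-a.s., assuming Y is integrable under both measures. -/

import Mathlib

open MeasureTheory

/-- Invariance of a representation is preserved under mixtures of environments:
if `E[Y | Φ] = h(Φ)` a.s. under both `μ₁` and `μ₂`, then the same holds under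
the mixture `λ·μ₁ + (1-λ)·μ₂`. -/
theorem invariance_preserved_under_mixture
    {Ω : Type*} [MeasurableSpace Ω]
    (μ₁ μ₂ : Measure Ω) [IsProbabilityMeasure μ₁] [IsProbabilityMeasure μ₂]
    (Y : Ω → ℝ) (hYmeas : Measurable Y) (Φ : Ω → ℝ) (hΦ : Measurable Φ)
    (hYint₁ : Integrable Y μ₁) (hYint₂ : Integrable Y μ₂)
    (h : ℝ → ℝ) (hh : Measurable h)
    (h₁ : μ₁[Y | MeasurableSpace.comap Φ Real.measurableSpace] =ᵐ[μ₁] h ∘ Φ)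
    (h₂ : μ₂[Y | MeasurableSpace.comap Φ Real.measurableSpace] =ᵐ[μ₂] h ∘ Φ)
    (l : ℝ) (hl0 : 0 ≤ l) (hl1 : l ≤ 1) :
    (ENNReal.ofReal l • μ₁ + ENNReal.ofReal (1 - l) • μ₂)[Y |
        MeasurableSpace.comap Φ Real.measurableSpace]
      =ᵐ[ENNReal.ofReal l • μ₁ + ENNReal.ofReal (1 - l) • μ₂] h ∘ Φ := by
  have hm : MeasurableSpace.comap Φ Real.measurableSpace ≤ _ := hΦ.comap_le
  set μ := ENNReal.ofReal l • μ₁ + ENNReal.ofReal (1 - l) • μ₂ with hμ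
  have hint₁ : Integrable (h ∘ Φ) μ₁ := integrable_condExp.congr h₁
  have hint₂ : Integrable (h ∘ Φ) μ₂ := integrable_condExp.congr h₂
  have hYμ : Integrable Y μ :=
    (hYint₁.smul_measure ENNReal.ofReal_ne_top).add_measure
      (hYint₂.smul_measure ENNReal.ofReal_ne_top)
  have hhμ : Integrable (h ∘ Φ) μ :=
    (hint₁.smul_measure ENNReal.ofReal_ne_top).add_measure
      (hint₂.smul_measure ENNReal.ofReal_ne_top)
  haveI hfin : IsFiniteMeasure μ := by
    constructor
    simp only [hμ, Measure.add_apply, Measure.smul_apply, measure_univ, smul_eq_mul, mul_one]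
    exact ENNReal.add_lt_top.mpr ⟨ENNReal.ofReal_lt_top, ENNReal.ofReal_lt_top⟩
  have hΦm : Measurable[MeasurableSpace.comap Φ Real.measurableSpace] Φ :=
    Measurable.of_comap_le le_rfl
  have hgm : AEStronglyMeasurable[MeasurableSpace.comap Φ Real.measurableSpace] (h ∘ Φ) μ :=
    StronglyMeasurable.aestronglyMeasurable
      (Measurable.stronglyMeasurable (hh.comp hΦm))
  have hg_eq : ∀ s : Set Ω, MeasurableSet[MeasurableSpace.comap Φ Real.measurableSpace] s →
      μ s < ⊤ → ∫ x in s, (h ∘ Φ) x ∂μ = ∫ x in s, Y x ∂μ := by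
    intro s hs _
    have hrs : μ.restrict s
        = ENNReal.ofReal l • μ₁.restrict s + ENNReal.ofReal (1 - l) • μ₂.restrict s := by
      rw [hμ, Measure.restrict_add, Measure.restrict_smul, Measure.restrict_smul]
    have e₁ : ∫ x in s, (h ∘ Φ) x ∂μ₁ = ∫ x in s, Y x ∂μ₁ := by
      rw [← setIntegral_condExp hm hYint₁ hs]
      exact setIntegral_congr_ae (hm s hs) (h₁.symm.mono fun x hx _ => hx)
    have e₂ : ∫ x in s, (h ∘ Φ) x ∂μ₂ = ∫ x in s, Y x ∂μ₂ := by
      rw [← setIntegral_condExp hm hYint₂ hs]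
      exact setIntegral_congr_ae (hm s hs) (h₂.symm.mono fun x hx _ => hx)
    rw [show (∫ x in s, (h ∘ Φ) x ∂μ) = ∫ x, (h ∘ Φ) x ∂(μ.restrict s) from rfl,
      show (∫ x in s, Y x ∂μ) = ∫ x, Y x ∂(μ.restrict s) from rfl, hrs,
      integral_add_measure ((hint₁.integrableOn).smul_measure ENNReal.ofReal_ne_top)
        ((hint₂.integrableOn).smul_measure ENNReal.ofReal_ne_top),
      integral_add_measure ((hYint₁.integrableOn).smul_measure ENNReal.ofReal_ne_top)
        ((hYint₂.integrableOn).smul_measure ENNReal.ofReal_ne_top),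
      integral_smul_measure, integral_smul_measure, integral_smul_measure,
      integral_smul_measure, e₁, e₂]
  exact (ae_eq_condExp_of_forall_setIntegral_eq hm hYμ
    (fun s _ _ => hhμ.integrableOn) hg_eq hgm).symm
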